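/- Let n ≥ 1 and a ≥ 2 be natural numbers. Then every p ∈ MvPolynomial (Fin n) ℝ that is homogeneous of degree a can be written uniquely as p = h + r² * g, where h is homogeneous of degree a and harmonic (Δh = 0), g is homogeneous of degree a − 2, and r² = ∑ i, (X i)^2. -/

import Mathlib

open MvPolynomial

namespace HarmonicDecompAux

variable {n : ℕ}

/-- factorial weight of a monomial -/
noncomputable def fact (m : Fin n →₀ ℕ) : ℝ := ∏ i, ((m i).factorial : ℝ)

lemma fact_pos (m : Fin n →₀ ℕ) : 0 < fact m :=
  Finset.prod_pos fun i _ => by positivity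

lemma fact_add_single (m : Fin n →₀ ℕ) (i : Fin n) :
    fact (m + Finsupp.single i 1) = ((m i : ℝ) + 1) * fact m := by
  simp only [fact]
  rw [← Finset.mul_prod_erase _ _ (Finset.mem_univ i),
      ← Finset.mul_prod_erase _ _ (Finset.mem_univ i)]
  have h1 : ∀ j ∈ Finset.univ.erase i,
      ((((m + Finsupp.single i 1 : Fin n →₀ ℕ)) j).factorial : ℝ) = ((m j).factorial : ℝ) := by
    intro j hj
    have hji : j ≠ i := (Finset.mem_erase.mp hj).1
    simp [Finsupp.add_apply, Finsupp.single_apply, (Ne.symm hji)]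
  rw [Finset.prod_congr rfl h1]
  have h2 : ((m + Finsupp.single i 1 : Fin n →₀ ℕ)) i = m i + 1 := by simp
  rw [h2, Nat.factorial_succ, Nat.cast_mul]
  push_cast
  ring

/-- apolar pairing -/
noncomputable def B (p q : MvPolynomial (Fin n) ℝ) : ℝ :=
  ∑ m ∈ p.support, coeff m p * coeff m q * fact m

lemma B_eq_sum {p q : MvPolynomial (Fin n) ℝ} {s : Finset (Fin n →₀ ℕ)}
    (hs : p.support ⊆ s) : B p q = ∑ m ∈ s, coeff m p * coeff m q * fact m := by
  refine Finset.sum_subset hs fun m _ hm => ?_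
  rw [MvPolynomial.notMem_support_iff.mp hm]; ring

lemma B_zero_left (q : MvPolynomial (Fin n) ℝ) : B 0 q = 0 := by
  simp [B]

lemma B_add_left (p₁ p₂ q : MvPolynomial (Fin n) ℝ) :
    B (p₁ + p₂) q = B p₁ q + B p₂ q := by
  classical
  set s := (p₁ + p₂).support ∪ p₁.support ∪ p₂.support with hs
  rw [B_eq_sum (p := p₁ + p₂) (s := s) (by intro m hm; simp [hs, hm]),
      B_eq_sum (p := p₁) (s := s) (by intro m hm; simp [hs, hm]),
      B_eq_sum (p := p₂) (s := s) (by intro m hm; simp [hs, hm]),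
      ← Finset.sum_add_distrib]
  refine Finset.sum_congr rfl fun m _ => ?_
  rw [coeff_add]; ring

lemma B_sum_left {ι : Type*} (s : Finset ι) (f : ι → MvPolynomial (Fin n) ℝ)
    (q : MvPolynomial (Fin n) ℝ) : B (∑ i ∈ s, f i) q = ∑ i ∈ s, B (f i) q := by
  classical
  induction s using Finset.induction_on with
  | empty => simp [B_zero_left]
  | insert a t hx ih =>
                    rw [Finset.sum_insert hx, Finset.sum_insert hx, B_add_left, ih]

lemma B_zero_right (p : MvPolynomial (Fin n) ℝ) : B p 0 = 0 := by
  simp [B]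

lemma B_sum_right {ι : Type*} (p : MvPolynomial (Fin n) ℝ) (s : Finset ι)
    (f : ι → MvPolynomial (Fin n) ℝ) : B p (∑ i ∈ s, f i) = ∑ i ∈ s, B p (f i) := by
  simp only [B, coeff_sum, Finset.mul_sum, Finset.sum_mul]
  exact Finset.sum_comm

lemma coeff_pderiv (i : Fin n) (m : Fin n →₀ ℕ) (φ : MvPolynomial (Fin n) ℝ) :
    coeff m (pderiv i φ) = ((m i : ℝ) + 1) * coeff (m + Finsupp.single i 1) φ := by
  induction φ using MvPolynomial.induction_on' with
  | add p q hp hq => simp [coeff_add, hp, hq, mul_add]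
  | monomial s a =>
    rw [pderiv_monomial, coeff_monomial, coeff_monomial]
    by_cases h2 : s = m + Finsupp.single i 1
    · have hsub : s - Finsupp.single i 1 = m := by
        rw [h2]; exact add_tsub_cancel_right _ _
      have hsi : s i = m i + 1 := by rw [h2]; simp
      rw [if_pos hsub, if_pos h2, hsi]
      push_cast; ring
    · rw [if_neg h2, mul_zero]
      by_cases h1 : s - Finsupp.single i 1 = m
      · rw [if_pos h1]
        have hsi : s i = 0 := by
          by_contra hne
          apply h2
          have hle : Finsupp.single i 1 ≤ s := by
            rw [Finsupp.single_le_iff]; omega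
          rw [← h1, tsub_add_cancel_of_le hle]
        rw [hsi]; simp
      · rw [if_neg h1]

lemma B_X_mul (i : Fin n) (p q : MvPolynomial (Fin n) ℝ) :
    B (X i * p) q = B p (pderiv i q) := by
  rw [B, support_X_mul, Finset.sum_map, B]
  refine Finset.sum_congr rfl fun m _ => ?_
  rw [addLeftEmbedding_apply, coeff_X_mul, coeff_pderiv,
      add_comm (Finsupp.single i 1) m, fact_add_single]
  ring

lemma B_self_pos {p : MvPolynomial (Fin n) ℝ} (hp : p ≠ 0) : 0 < B p p := by
  refine Finset.sum_pos (fun m hm => ?_) (MvPolynomial.support_nonempty.mpr hp)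
  have hc : coeff m p ≠ 0 := MvPolynomial.mem_support_iff.mp hm
  have := fact_pos m
  nlinarith [sq_nonneg (coeff m p), mul_self_pos.mpr hc]

/-- the radial polynomial r² -/
noncomputable def rsq (n : ℕ) : MvPolynomial (Fin n) ℝ :=
  ∑ i, (X i : MvPolynomial (Fin n) ℝ) ^ 2

/-- the Laplacian -/
noncomputable def lap (p : MvPolynomial (Fin n) ℝ) : MvPolynomial (Fin n) ℝ :=
  ∑ i, pderiv i (pderiv i p)

lemma lap_add (p q : MvPolynomial (Fin n) ℝ) : lap (p + q) = lap p + lap q := by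
  simp [lap, Finset.sum_add_distrib]

lemma lap_sub (p q : MvPolynomial (Fin n) ℝ) : lap (p - q) = lap p - lap q := by
  simp [lap, Finset.sum_sub_distrib]

lemma lap_smul (c : ℝ) (p : MvPolynomial (Fin n) ℝ) : lap (c • p) = c • lap p := by
  simp [lap, Finset.smul_sum]

lemma B_rsq_mul (g q : MvPolynomial (Fin n) ℝ) :
    B (rsq n * g) q = B g (lap q) := by
  have h : rsq n * g = ∑ i, X i * (X i * g) := by
    rw [rsq, Finset.sum_mul]
    exact Finset.sum_congr rfl fun i _ => by ring
  rw [h, B_sum_left, lap, B_sum_right]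
  exact Finset.sum_congr rfl fun i _ => by rw [B_X_mul, B_X_mul]

lemma rsq_ne_zero (hn : 1 ≤ n) : rsq n ≠ 0 := by
  intro h
  have := congrArg (eval fun _ : Fin n => (1 : ℝ)) h
  simp [rsq] at this
  omega

lemma lap_rsq_mul_injective (hn : 1 ≤ n) {g : MvPolynomial (Fin n) ℝ}
    (h : lap (rsq n * g) = 0) : g = 0 := by
  have hB : B (rsq n * g) (rsq n * g) = 0 := by
    rw [B_rsq_mul, h, B_zero_right]
  have hrg : rsq n * g = 0 := by
    by_contra hne
    exact absurd hB (ne_of_gt (B_self_pos hne))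
  rcases mul_eq_zero.mp hrg with h1 | h2
  · exact absurd h1 (rsq_ne_zero hn)
  · exact h2

lemma isHomogeneous_pderiv {φ : MvPolynomial (Fin n) ℝ} {d : ℕ} (i : Fin n)
    (hφ : φ.IsHomogeneous d) : (pderiv i φ).IsHomogeneous (d - 1) := by
  intro m hm
  rw [coeff_pderiv] at hm
  have hc : coeff (m + Finsupp.single i 1) φ ≠ 0 := by
    intro h; rw [h, mul_zero] at hm; exact hm rfl
  have hd := hφ hc
  rw [map_add] at hd
  have hsingle : (Finsupp.weight 1) (Finsupp.single i 1) = 1 := by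
    simp [Finsupp.weight_apply, Finsupp.sum_single_index]
  rw [hsingle] at hd
  omega

lemma isHomogeneous_lap {φ : MvPolynomial (Fin n) ℝ} {d : ℕ}
    (hφ : φ.IsHomogeneous d) : (lap φ).IsHomogeneous (d - 2) := by
  have : ∀ i : Fin n, (pderiv i (pderiv i φ)).IsHomogeneous (d - 2) := by
    intro i
    have h1 := isHomogeneous_pderiv i hφ
    have h2 := isHomogeneous_pderiv i h1
    have : d - 1 - 1 = d - 2 := by omega
    rwa [this] at h2
  exact MvPolynomial.IsHomogeneous.sum _ _ _ fun i _ => this i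

lemma isHomogeneous_rsq : (rsq n).IsHomogeneous 2 :=
  MvPolynomial.IsHomogeneous.sum _ _ _ fun i _ => isHomogeneous_X_pow i 2

instance homog_fd (d : ℕ) :
    FiniteDimensional ℝ (homogeneousSubmodule (Fin n) ℝ d) := by
  apply Submodule.finiteDimensional_of_le (S₂ := restrictTotalDegree (Fin n) ℝ d)
  intro p hp
  rw [mem_restrictTotalDegree]
  exact ((mem_homogeneousSubmodule _ _).mp hp).totalDegree_le

end HarmonicDecompAux

open HarmonicDecompAux

/-- Every polynomial `p` homogeneous of degree `a ≥ 2` can be written uniquely as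
`p = h + r² * g` with `h` harmonic homogeneous of degree `a` and `g` homogeneous of
degree `a - 2`, where `r² = ∑ i, (X i)^2`. -/
theorem homogeneous_eq_harmonic_add_rsq_mul_unique (n a : ℕ) (hn : 1 ≤ n) (ha : 2 ≤ a)
    (p : MvPolynomial (Fin n) ℝ) (hp : p ∈ homogeneousSubmodule (Fin n) ℝ a) :
    ∃! hg : MvPolynomial (Fin n) ℝ × MvPolynomial (Fin n) ℝ,
      p = hg.1 + (∑ i, (X i : MvPolynomial (Fin n) ℝ) ^ 2) * hg.2 ∧
      hg.1 ∈ homogeneousSubmodule (Fin n) ℝ a ∧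
      (∑ i, pderiv i (pderiv i hg.1)) = 0 ∧
      hg.2 ∈ homogeneousSubmodule (Fin n) ℝ (a - 2) := by
  classical
  have hrsq_eq : (∑ i, (X i : MvPolynomial (Fin n) ℝ) ^ 2) = rsq n := rfl
  -- the linear operator g ↦ Δ(r² g) on H_{a-2}
  have hmem : ∀ g : homogeneousSubmodule (Fin n) ℝ (a - 2),
      lap (rsq n * (g : MvPolynomial (Fin n) ℝ)) ∈ homogeneousSubmodule (Fin n) ℝ (a - 2) := by
    intro g
    have hg : (g : MvPolynomial (Fin n) ℝ).IsHomogeneous (a - 2) :=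
      (mem_homogeneousSubmodule _ _).mp g.2
    have hmul : (rsq n * (g : MvPolynomial (Fin n) ℝ)).IsHomogeneous a := by
      have := isHomogeneous_rsq.mul hg
      have h2 : 2 + (a - 2) = a := by omega
      rwa [h2] at this
    exact (mem_homogeneousSubmodule _ _).mpr (isHomogeneous_lap hmul)
  let T : homogeneousSubmodule (Fin n) ℝ (a - 2) →ₗ[ℝ] homogeneousSubmodule (Fin n) ℝ (a - 2) :=
    { toFun := fun g => ⟨lap (rsq n * (g : MvPolynomial (Fin n) ℝ)), hmem g⟩
      map_add' := fun g₁ g₂ => by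
        ext1
        simp only [Submodule.coe_add, mul_add, lap_add]
      map_smul' := fun c g => by
        ext1
        simp only [Submodule.coe_smul, RingHom.id_apply, SetLike.val_smul]
        rw [mul_smul_comm, lap_smul] }
  have hTinj : Function.Injective T := by
    intro g₁ g₂ h
    have h0 : lap (rsq n * ((g₁ : MvPolynomial (Fin n) ℝ) - (g₂ : MvPolynomial (Fin n) ℝ))) = 0 := by
      have := congrArg (Subtype.val) h
      simp only [T, LinearMap.coe_mk, AddHom.coe_mk] at this
      rw [mul_sub, lap_sub, this, sub_self]
    have := lap_rsq_mul_injective hn h0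
    ext1
    exact sub_eq_zero.mp this
  have hTsurj : Function.Surjective T :=
    (LinearMap.injective_iff_surjective).mp hTinj
  -- Δp ∈ H_{a-2}
  have hpH : p.IsHomogeneous a := (mem_homogeneousSubmodule _ _).mp hp
  have hlapP : lap p ∈ homogeneousSubmodule (Fin n) ℝ (a - 2) :=
    (mem_homogeneousSubmodule _ _).mpr (isHomogeneous_lap hpH)
  obtain ⟨g, hg⟩ := hTsurj ⟨lap p, hlapP⟩
  have hgEq : lap (rsq n * (g : MvPolynomial (Fin n) ℝ)) = lap p :=
    congrArg Subtype.val hg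
  refine ⟨(p - rsq n * (g : MvPolynomial (Fin n) ℝ), (g : MvPolynomial (Fin n) ℝ)), ⟨?_, ?_, ?_, g.2⟩, ?_⟩
  · rw [hrsq_eq]; ring
  · have hg2 : (g : MvPolynomial (Fin n) ℝ).IsHomogeneous (a - 2) :=
      (mem_homogeneousSubmodule _ _).mp g.2
    have hmul : (rsq n * (g : MvPolynomial (Fin n) ℝ)).IsHomogeneous a := by
      have := isHomogeneous_rsq.mul hg2
      have h2 : 2 + (a - 2) = a := by omega
      rwa [h2] at this
    exact (mem_homogeneousSubmodule _ _).mpr (hpH.sub hmul)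
  · show lap (p - rsq n * (g : MvPolynomial (Fin n) ℝ)) = 0
    rw [lap_sub, hgEq, sub_self]
  · rintro ⟨h', g'⟩ ⟨heq, _, hharm, _⟩
    have hharm' : lap h' = 0 := hharm
    rw [hrsq_eq] at heq
    have hkey : lap (rsq n * (g' - (g : MvPolynomial (Fin n) ℝ))) = 0 := by
      have hsub : rsq n * (g' - (g : MvPolynomial (Fin n) ℝ))
          = (p - rsq n * (g : MvPolynomial (Fin n) ℝ)) - h' := by
        rw [heq]; ring
      rw [hsub, lap_sub, hharm']
      rw [lap_sub, hgEq, sub_self, zero_sub, neg_zero]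
    have hgg : g' = (g : MvPolynomial (Fin n) ℝ) :=
      sub_eq_zero.mp (lap_rsq_mul_injective hn hkey)
    have hh : h' = p - rsq n * (g : MvPolynomial (Fin n) ℝ) := by
      rw [heq, hgg]; ring
    exact Prod.ext hh hgg
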